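/- Let a and b be integers greater than 1 such that a^m ≠ b^n for all positive integers m and n. Let k be a positive integer and let (γ_0, γ_1, …, γ_{k−2}, γ_{k−1}) be a k-tuple with γ_i ∈ {0, 1, …, a−1} for 0 ≤ i ≤ k−2 and γ_{k−1} ∈ {1, 2, …, a−1}. Then there exist infinitely many positive integers n such that b^n has leading k-digit string (γ_0, γ_1, …, γ_{k−2}, γ_{k−1}) with respect to a. -/

import Mathlib

/-- The `i`-th digit of `n` in base `a`. -/
def digit (a n i : ℕ) : ℕ := n / a ^ i % a

/-- `n` has leading `k`-digit string `(γ 0, …, γ (k-1))` with respect to base `a`: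
if `r = Nat.log a n` is the position of the leading digit of `n`, then `k ≤ r + 1`
and the digit of `n` at position `r - k + 1 + i` equals `γ i` for `0 ≤ i < k`. -/
def hasLeadingDigits (a n k : ℕ) (γ : ℕ → ℕ) : Prop :=
  k ≤ Nat.log a n + 1 ∧ ∀ i, i < k → digit a n (Nat.log a n + 1 - k + i) = γ i

open Set

lemma sum_lt_pow (a k : ℕ) (ha : 1 < a) (γ : ℕ → ℕ) (hγ : ∀ j, j < k → γ j < a) :
    (∑ j ∈ Finset.range k, γ j * a ^ j) < a ^ k := by
  induction k with
  | zero => simpa using Nat.one_pos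
  | succ t ih =>
    rw [Finset.sum_range_succ, pow_succ]
    have h1 : (∑ j ∈ Finset.range t, γ j * a ^ j) < a ^ t :=
      ih (fun j hj => hγ j (hj.trans (Nat.lt_succ_self t)))
    have h2 : γ t * a ^ t ≤ (a - 1) * a ^ t :=
      Nat.mul_le_mul_right _ (Nat.le_sub_one_of_lt (hγ t (Nat.lt_succ_self t)))
    have h3 : a ^ t + (a - 1) * a ^ t = a ^ t * a := by
      have h4 : 1 + (a - 1) = a := by omega
      calc a ^ t + (a - 1) * a ^ t = (1 + (a - 1)) * a ^ t := by ring
      _ = a ^ t * a := by rw [h4, mul_comm]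
    omega

lemma sum_div_pow (a k : ℕ) (ha : 1 < a) (γ : ℕ → ℕ) (hγ : ∀ j, j < k → γ j < a) :
    ∀ i, (∑ j ∈ Finset.range k, γ j * a ^ j) / a ^ i
      = ∑ j ∈ Finset.range (k - i), γ (i + j) * a ^ j := by
  intro i
  induction i with
  | zero => simp
  | succ t ih =>
    rw [pow_succ, ← Nat.div_div_eq_div_mul, ih]
    rcases Nat.eq_zero_or_pos (k - t) with h0 | hpos
    · have : k - (t + 1) = 0 := by omega
      simp [h0, this]
    · obtain ⟨s, hs⟩ : ∃ s, k - t = s + 1 := ⟨k - t - 1, by omega⟩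
      have hks : k - (t + 1) = s := by omega
      rw [hs, Finset.sum_range_succ', hks]
      have hrw : ∀ j, γ (t + (j + 1)) * a ^ (j + 1) = (γ (t + 1 + j) * a ^ j) * a := by
        intro j
        have h5 : t + (j + 1) = t + 1 + j := by omega
        rw [h5, pow_succ]; ring
      simp only [hrw, Nat.add_zero]
      rw [← Finset.sum_mul, pow_zero, mul_one, mul_comm,
        Nat.mul_add_div (by omega : 0 < a), Nat.div_eq_of_lt (hγ t (by omega)), Nat.add_zero]

lemma key_lemma (a k e n : ℕ) (ha : 1 < a) (hk : 0 < k) (γ : ℕ → ℕ)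
    (hγ : ∀ j, j < k → γ j < a) (hlast : 1 ≤ γ (k - 1))
    (h1 : (∑ j ∈ Finset.range k, γ j * a ^ j) * a ^ e ≤ n)
    (h2 : n < ((∑ j ∈ Finset.range k, γ j * a ^ j) + 1) * a ^ e) :
    hasLeadingDigits a n k γ := by
  set N := ∑ j ∈ Finset.range k, γ j * a ^ j with hN
  have hNlt : N < a ^ k := sum_lt_pow a k ha γ hγ
  have hNge : a ^ (k - 1) ≤ N := by
    calc a ^ (k-1) = 1 * a ^ (k-1) := (one_mul _).symm
    _ ≤ γ (k-1) * a ^ (k-1) := Nat.mul_le_mul_right _ hlast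
    _ ≤ N := Finset.single_le_sum (f := fun j => γ j * a ^ j)
        (fun i _ => Nat.zero_le _) (Finset.mem_range.mpr (by omega))
  have hlog : Nat.log a n = e + (k - 1) := by
    apply Nat.log_eq_of_pow_le_of_lt_pow
    · calc a ^ (e + (k-1)) = a ^ (k-1) * a ^ e := by rw [pow_add, mul_comm]
      _ ≤ N * a ^ e := Nat.mul_le_mul_right _ hNge
      _ ≤ n := h1
    · calc n < (N + 1) * a ^ e := h2
      _ ≤ a ^ k * a ^ e := Nat.mul_le_mul_right _ hNlt
      _ = a ^ (e + (k - 1) + 1) := by rw [← pow_add]; congr 1; omega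
  have hdivN : n / a ^ e = N := Nat.div_eq_of_lt_le h1 h2
  constructor
  · omega
  · intro i hi
    have hpos : Nat.log a n + 1 - k + i = e + i := by omega
    rw [hpos]
    unfold digit
    rw [pow_add, ← Nat.div_div_eq_div_mul, hdivN, hN, sum_div_pow a k ha γ hγ]
    obtain ⟨s, hs⟩ : ∃ s, k - i = s + 1 := ⟨k - i - 1, by omega⟩
    rw [hs, Finset.sum_range_succ']
    have hrw : ∀ j, γ (i + (j + 1)) * a ^ (j + 1) = a * (γ (i + (j + 1)) * a ^ j) := by
      intro j; ring
    simp only [hrw, Nat.add_zero]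
    rw [← Finset.mul_sum, pow_zero, mul_one, Nat.mul_add_mod, Nat.mod_eq_of_lt (hγ i hi)]


lemma step_lemma (δ u : ℝ) (hδ : 0 < δ) (hu : 0 ≤ u) :
    ∃ m : ℕ, u < m * δ ∧ (m : ℝ) * δ ≤ u + δ ∧ u / δ < m := by
  refine ⟨⌊u / δ⌋₊ + 1, ?_, ?_, ?_⟩
  · have h1 : u / δ < (⌊u / δ⌋₊ + 1 : ℝ) := by exact_mod_cast Nat.lt_floor_add_one (u / δ)
    calc u = (u / δ) * δ := by field_simp
    _ < (⌊u / δ⌋₊ + 1 : ℝ) * δ := mul_lt_mul_of_pos_right h1 hδ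
    _ = ((⌊u / δ⌋₊ + 1 : ℕ) : ℝ) * δ := by push_cast; ring
  · have h2 : (⌊u / δ⌋₊ : ℝ) ≤ u / δ := Nat.floor_le (div_nonneg hu hδ.le)
    have h3 : ((⌊u / δ⌋₊ + 1 : ℕ) : ℝ) ≤ u / δ + 1 := by push_cast; linarith
    calc ((⌊u / δ⌋₊ + 1 : ℕ) : ℝ) * δ ≤ (u / δ + 1) * δ := mul_le_mul_of_nonneg_right h3 hδ.le
    _ = u + δ := by field_simp
  · have h1 : u / δ < (⌊u / δ⌋₊ + 1 : ℝ) := by exact_mod_cast Nat.lt_floor_add_one (u / δ)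
    exact_mod_cast h1

lemma small_lemma (θ : ℝ) (hθpos : 0 < θ)
    (hirr : ∀ p q : ℤ, q ≠ 0 → (q : ℝ) * θ ≠ p) (ε : ℝ) (hε0 : 0 < ε) (hε1 : ε < 1) :
    ∃ (n : ℕ) (q : ℤ), 0 < n ∧ |(n : ℝ) * θ - q| ∈ Ioo 0 ε := by
  rcases (AddSubgroup.closure ({θ, 1} : Set ℝ)).dense_or_cyclic with hd | ⟨c, hc⟩
  · obtain ⟨g, hgS, hg⟩ := hd.exists_between hε0
    rw [SetLike.mem_coe, AddSubgroup.mem_closure_pair] at hgS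
    obtain ⟨p, q, hpq⟩ := hgS
    simp only [zsmul_eq_mul, mul_one] at hpq
    have hp : p ≠ 0 := by
      rintro rfl
      rw [Int.cast_zero, zero_mul, zero_add] at hpq
      have h1 : (0 : ℝ) < q := hpq ▸ hg.1
      have h2 : (q : ℝ) < 1 := hpq ▸ hg.2.trans hε1
      have h3 : (0 : ℤ) < q := by exact_mod_cast h1
      have h4 : (1 : ℝ) ≤ q := by exact_mod_cast h3
      linarith
    rcases hp.lt_or_gt with hneg | hposp
    · refine ⟨(-p).toNat, q, by omega, ?_⟩
      have h6 : ((-p).toNat : ℤ) = -p := Int.toNat_of_nonneg (by omega)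
      have hcast : (((-p).toNat : ℕ) : ℝ) = -(p : ℝ) := by
        exact_mod_cast congrArg (fun z : ℤ => (z : ℝ)) h6
      have h7 : ((-p).toNat : ℝ) * θ - q = -g := by rw [hcast]; linarith [hpq]
      rw [h7, abs_neg, abs_of_pos hg.1]
      exact hg
    · refine ⟨p.toNat, -q, by omega, ?_⟩
      have h6 : (p.toNat : ℤ) = p := Int.toNat_of_nonneg hposp.le
      have hcast : ((p.toNat : ℕ) : ℝ) = (p : ℝ) := by
        exact_mod_cast congrArg (fun z : ℤ => (z : ℝ)) h6
      have h7 : (p.toNat : ℝ) * θ - ((-q : ℤ) : ℝ) = g := by push_cast; rw [hcast]; linarith [hpq]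
      rw [h7, abs_of_pos hg.1]
      exact hg
  · exfalso
    have hθmem : θ ∈ AddSubgroup.closure ({θ, 1} : Set ℝ) :=
      AddSubgroup.subset_closure (by simp)
    have h1mem : (1 : ℝ) ∈ AddSubgroup.closure ({θ, 1} : Set ℝ) :=
      AddSubgroup.subset_closure (by simp)
    rw [hc, AddSubgroup.mem_closure_singleton] at hθmem h1mem
    obtain ⟨p, hp⟩ := hθmem
    obtain ⟨s, hs⟩ := h1mem
    have hp' : (p : ℝ) * c = θ := by rw [← hp, zsmul_eq_mul]
    have hs' : (s : ℝ) * c = 1 := by rw [← hs, zsmul_eq_mul]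
    have hs0 : s ≠ 0 := by
      rintro rfl
      norm_num at hs'
    exact hirr p s hs0 (by linear_combination (-(s : ℝ)) * hp' + (p : ℝ) * hs')

lemma density_lemma (θ : ℝ) (hθpos : 0 < θ)
    (hirr : ∀ p q : ℤ, q ≠ 0 → (q : ℝ) * θ ≠ p) (x y : ℝ) (hx : 0 ≤ x) (hxy : x < y)
    (hy : y ≤ 1) (M : ℕ) :
    ∃ n : ℕ, M < n ∧ ∃ e : ℤ, (n : ℝ) * θ - e ∈ Ioo x y := by
  have hε0 : 0 < (y - x) / 2 := by linarith
  have hε1 : (y - x) / 2 < 1 := by linarith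
  have hεyx : (y - x) / 2 < y - x := by linarith
  obtain ⟨n₀, q, hn₀, habs⟩ := small_lemma θ hθpos hirr ((y - x) / 2) hε0 hε1
  have habs1 : 0 < |(n₀ : ℝ) * θ - q| := habs.1
  have habs2 : |(n₀ : ℝ) * θ - q| < (y - x) / 2 := habs.2
  rcases (abs_pos.mp habs1).lt_or_gt with hneg | hpos
  · -- n₀θ - q < 0
    have hδ0 : (0 : ℝ) < (q : ℝ) - n₀ * θ := by linarith
    have hδε : (q : ℝ) - n₀ * θ < (y - x) / 2 := by
      have := abs_of_neg hneg ▸ habs2; linarith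
    obtain ⟨m, hm1, hm2, hm3⟩ := step_lemma ((q : ℝ) - n₀ * θ) ((M : ℝ) + 1 - y) hδ0
      (by linarith [Nat.cast_nonneg (α := ℝ) M])
    refine ⟨m * n₀, ?_, (m : ℤ) * q - (M + 1), ?_⟩
    · have h7 : ((M : ℝ) + 1 - y) ≤ ((M : ℝ) + 1 - y) / ((q : ℝ) - n₀ * θ) :=
        le_div_self (by linarith [Nat.cast_nonneg (α := ℝ) M]) hδ0 (by linarith)
      have h8 : (M : ℝ) < m := by linarith
      have h9 : M < m := by exact_mod_cast h8
      exact lt_of_lt_of_le h9 (Nat.le_mul_of_pos_right m hn₀)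
    · have hval : ((m * n₀ : ℕ) : ℝ) * θ - (((m : ℤ) * q - (M + 1) : ℤ) : ℝ)
          = (M : ℝ) + 1 - m * ((q : ℝ) - n₀ * θ) := by push_cast; ring
      rw [Set.mem_Ioo, hval]
      constructor
      · linarith
      · linarith
  · -- n₀θ - q > 0
    have hδ0 : (0 : ℝ) < (n₀ : ℝ) * θ - q := hpos
    have hδε : (n₀ : ℝ) * θ - q < (y - x) / 2 := by
      have := abs_of_pos hpos ▸ habs2; linarith
    obtain ⟨m, hm1, hm2, hm3⟩ := step_lemma ((n₀ : ℝ) * θ - q) ((M : ℝ) + x) hδ0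
      (by positivity)
    refine ⟨m * n₀, ?_, (m : ℤ) * q + M, ?_⟩
    · have h7 : ((M : ℝ) + x) ≤ ((M : ℝ) + x) / ((n₀ : ℝ) * θ - q) :=
        le_div_self (by positivity) hδ0 (by linarith)
      have h8 : (M : ℝ) < m := by linarith
      have h9 : M < m := by exact_mod_cast h8
      exact lt_of_lt_of_le h9 (Nat.le_mul_of_pos_right m hn₀)
    · have hval : ((m * n₀ : ℕ) : ℝ) * θ - (((m : ℤ) * q + M : ℤ) : ℝ)
          = (m : ℝ) * ((n₀ : ℝ) * θ - q) - M := by push_cast; ring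
      rw [Set.mem_Ioo, hval]
      constructor
      · linarith
      · linarith

theorem stmt_10 (a b : ℕ) (ha : 1 < a) (hb : 1 < b)
    (h : ∀ m n : ℕ, 0 < m → 0 < n → a ^ m ≠ b ^ n)
    (k : ℕ) (hk : 0 < k) (γ : ℕ → ℕ)
    (hγ : ∀ i, i < k → γ i ≤ a - 1) (hlast : 1 ≤ γ (k - 1)) :
    {n : ℕ | 0 < n ∧ hasLeadingDigits a (b ^ n) k γ}.Infinite := by
  have haR : (1 : ℝ) < a := by exact_mod_cast ha
  have hbR : (1 : ℝ) < b := by exact_mod_cast hb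
  have hθpos : 0 < Real.logb a b := Real.logb_pos haR hbR
  have hirr : ∀ p q : ℤ, q ≠ 0 → (q : ℝ) * Real.logb a b ≠ p := by
    have key : ∀ p q : ℤ, 0 < q → (q : ℝ) * Real.logb a b = p → False := by
      intro p q hqpos heq
      have hppos : 0 < p := by
        have h0 : (0 : ℝ) < (q : ℝ) * Real.logb a b :=
          mul_pos (by exact_mod_cast hqpos) hθpos
        rw [heq] at h0; exact_mod_cast h0
      have hm : (p.toNat : ℤ) = p := Int.toNat_of_nonneg hppos.le
      have hn : (q.toNat : ℤ) = q := Int.toNat_of_nonneg hqpos.le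
      have e1 : ((q.toNat : ℕ) : ℝ) = (q : ℝ) := by exact_mod_cast hn
      have e2 : ((p.toNat : ℕ) : ℝ) = (p : ℝ) := by exact_mod_cast hm
      have h1 : ((q.toNat : ℕ) : ℝ) * Real.logb a b = ((p.toNat : ℕ) : ℝ) := by
        rw [e1, e2]; exact heq
      have h2 : Real.logb a ((b : ℝ) ^ q.toNat) = Real.logb a ((a : ℝ) ^ p.toNat) := by
        rw [Real.logb_pow, Real.logb_pow, Real.logb_self_eq_one haR, mul_one, h1]
      have h3 : (b : ℝ) ^ q.toNat = (a : ℝ) ^ p.toNat := by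
        have hb1 : (0 : ℝ) < (b : ℝ) ^ q.toNat := by positivity
        have ha1 : (0 : ℝ) < (a : ℝ) ^ p.toNat := by positivity
        exact le_antisymm
          ((Real.logb_le_logb haR hb1 ha1).mp h2.le)
          ((Real.logb_le_logb haR ha1 hb1).mp h2.ge)
      have h4 : b ^ q.toNat = a ^ p.toNat := by exact_mod_cast h3
      exact h p.toNat q.toNat (by omega) (by omega) h4.symm
    intro p q hq heq
    rcases hq.lt_or_gt with h1 | h2
    · exact key (-p) (-q) (by omega) (by push_cast; linarith)
    · exact key p q h2 heq
  have hγ' : ∀ j, j < k → γ j < a := fun j hj => by have := hγ j hj; omega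
  set N := ∑ j ∈ Finset.range k, γ j * a ^ j with hNdef
  have hNlt : N < a ^ k := sum_lt_pow a k ha γ hγ'
  have hNge : a ^ (k - 1) ≤ N := by
    calc a ^ (k - 1) = 1 * a ^ (k - 1) := (one_mul _).symm
    _ ≤ γ (k - 1) * a ^ (k - 1) := Nat.mul_le_mul_right _ hlast
    _ ≤ N := Finset.single_le_sum (f := fun j => γ j * a ^ j)
        (fun i _ => Nat.zero_le _) (Finset.mem_range.mpr (by omega))
  have hN1 : 1 ≤ N := le_trans (Nat.one_le_pow _ _ (by omega)) hNge
  have hNR : (0 : ℝ) < (N : ℝ) := by exact_mod_cast hN1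
  have hk1 : ((k - 1 : ℕ) : ℝ) = (k : ℝ) - 1 := by
    push_cast [Nat.cast_sub hk]; ring
  have hlogN : (k : ℝ) - 1 ≤ Real.logb a N := by
    have hpow : ((a ^ (k - 1) : ℕ) : ℝ) ≤ (N : ℝ) := by exact_mod_cast hNge
    have hpow' : ((a : ℝ) ^ (k - 1 : ℕ)) ≤ (N : ℝ) := by push_cast at hpow; exact hpow
    have := Real.logb_le_logb_of_le haR (by positivity) hpow'
    rwa [Real.logb_pow, Real.logb_self_eq_one haR, mul_one, hk1] at this
  have hlogN1 : Real.logb a (N + 1) ≤ (k : ℝ) := by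
    have hpow : ((N : ℝ) + 1) ≤ ((a : ℝ) ^ k) := by
      have : N + 1 ≤ a ^ k := hNlt
      exact_mod_cast this
    have := Real.logb_le_logb_of_le haR (by positivity) hpow
    rwa [Real.logb_pow, Real.logb_self_eq_one haR, mul_one] at this
  have hxy : Real.logb a N < Real.logb a (N + 1) :=
    Real.logb_lt_logb haR hNR (by linarith)
  -- main step: for every M there is n > M in the set
  have main : ∀ M : ℕ, ∃ n, M < n ∧ 0 < n ∧ hasLeadingDigits a (b ^ n) k γ := by
    intro M
    obtain ⟨n, hn, e, he⟩ := density_lemma (Real.logb a b) hθpos hirr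
      (Real.logb a N - ((k : ℝ) - 1)) (Real.logb a (N + 1) - ((k : ℝ) - 1))
      (by linarith) (by linarith) (by linarith) (max M (a ^ k))
    obtain ⟨he1, he2⟩ := he
    have hnM : M < n := lt_of_le_of_lt (le_max_left _ _) hn
    have hnak : a ^ k < n := lt_of_le_of_lt (le_max_right _ _) hn
    have hbn : a ^ k < b ^ n :=
      lt_of_lt_of_le (lt_trans hnak (Nat.lt_two_pow_self (n := n))) (Nat.pow_le_pow_left hb n)
    have hlogbn : (n : ℝ) * Real.logb a b = Real.logb a ((b : ℝ) ^ n) :=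
      (Real.logb_pow a (b : ℝ) n).symm
    -- e ≥ k
    have hkθ : (k : ℝ) < (n : ℝ) * Real.logb a b := by
      have hcast : ((a ^ k : ℕ) : ℝ) < ((b ^ n : ℕ) : ℝ) := by exact_mod_cast hbn
      have hcast' : ((a : ℝ) ^ k) < ((b : ℝ) ^ n) := by push_cast at hcast; exact hcast
      have := Real.logb_lt_logb haR (by positivity) hcast'
      rw [Real.logb_pow, Real.logb_self_eq_one haR, mul_one] at this
      rw [hlogbn]; exact this
    have hek : (k : ℤ) ≤ e := by
      have hyle : Real.logb a (N + 1) - ((k : ℝ) - 1) ≤ 1 := by linarith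
      have : (k : ℝ) - 1 < (e : ℝ) := by linarith
      have : (k : ℤ) - 1 < e := by exact_mod_cast this
      omega
    set eN : ℕ := e.toNat - (k - 1) with heNdef
    have hetn : (e.toNat : ℤ) = e := Int.toNat_of_nonneg (by omega)
    have hkle : k - 1 ≤ e.toNat := by omega
    have heN : (eN : ℝ) = (e : ℝ) - ((k : ℝ) - 1) := by
      have h5 : ((eN : ℕ) : ℝ) = (e.toNat : ℝ) - ((k - 1 : ℕ) : ℝ) := by
        rw [heNdef]; push_cast [Nat.cast_sub hkle]; ring
      have h6 : ((e.toNat : ℕ) : ℝ) = (e : ℝ) := by exact_mod_cast hetn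
      rw [h5, h6, hk1]
    have hane : ((a : ℝ) ^ eN) ≠ 0 := by positivity
    have hlogae : Real.logb a ((a : ℝ) ^ eN) = (eN : ℝ) := by
      rw [Real.logb_pow, Real.logb_self_eq_one haR, mul_one]
    have hlow : (N : ℝ) * (a : ℝ) ^ eN < (b : ℝ) ^ n := by
      apply (Real.logb_lt_logb_iff haR (by positivity) (by positivity)).mp
      rw [Real.logb_mul (by positivity) hane, hlogae, ← hlogbn, heN]
      linarith
    have hupp : (b : ℝ) ^ n < ((N : ℝ) + 1) * (a : ℝ) ^ eN := by
      apply (Real.logb_lt_logb_iff haR (by positivity) (by positivity)).mp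
      rw [Real.logb_mul (by positivity) hane, hlogae, ← hlogbn, heN]
      linarith
    have hlownat : N * a ^ eN < b ^ n := by exact_mod_cast hlow
    have huppnat : b ^ n < (N + 1) * a ^ eN := by exact_mod_cast hupp
    exact ⟨n, hnM, by omega, key_lemma a k eN (b ^ n) ha hk γ hγ' hlast
      (le_of_lt hlownat) huppnat⟩
  by_contra hfin
  rw [Set.not_infinite] at hfin
  obtain ⟨ub, hub⟩ := hfin.bddAbove
  obtain ⟨n, hnub, hpos, hld⟩ := main ub
  exact absurd (hub ⟨hpos, hld⟩) (Nat.not_le.mpr hnub)
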